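/- Let f be a holomorphic function on the open unit disk 𝔻 with |f(λ)| ≤ 1 for all λ ∈ 𝔻. Then the kernel K(λ, z) = (1 − conj(f(λ))·f(z))² / (1 − conj(λ)·z)² is positive semi-definite on 𝔻. -/

import Mathlib

open Complex Metric ComplexOrder

/-- A kernel `K` on the open unit disk is positive semi-definite if for every finite
family of points in the disk and complex coefficients, the associated quadratic form
is a nonnegative real number (using the partial order on `ℂ`). -/
def IsPSDKernelOnDisk (K : ℂ → ℂ → ℂ) : Prop :=
  ∀ (n : ℕ) (lam : Fin n → ℂ), (∀ i, ‖lam i‖ < 1) →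
    ∀ c : Fin n → ℂ,
      0 ≤ ∑ i, ∑ j, (starRingEnd ℂ) (c i) * c j * K (lam i) (lam j)

section SchurProofAux
open Finset

noncomputable section SchurAuxSection

private lemma intervalIntegral_conj {f : ℝ → ℂ} {a b : ℝ} :
    ∫ x in a..b, (starRingEnd ℂ) (f x) = (starRingEnd ℂ) (∫ x in a..b, f x) := by
  simp only [intervalIntegral, map_sub, ← integral_conj]

/-- On the circle of radius `r`, `(conj (ζ - λ))⁻¹ = ζ * (r² - conj λ * ζ)⁻¹`. -/
private lemma conj_sub_inv {r : ℝ} (hr : 0 < r) {ζ lam : ℂ} (hζ : ‖ζ‖ = r)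
    (hlam : ‖lam‖ < r) :
    ((starRingEnd ℂ) (ζ - lam))⁻¹ = ζ * (((r : ℂ)) ^ 2 - (starRingEnd ℂ) lam * ζ)⁻¹ := by
  have hζ0 : ζ ≠ 0 := by
    intro h; rw [h] at hζ; simp at hζ; exact hr.ne' hζ.symm
  have hcc : (starRingEnd ℂ) ζ * ζ = ((r : ℂ)) ^ 2 := by
    rw [← Complex.normSq_eq_conj_mul_self, ← Complex.sq_norm, hζ]
    push_cast; ring
  have hD : ((r : ℂ)) ^ 2 - (starRingEnd ℂ) lam * ζ ≠ 0 := by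
    intro h
    have h2 : ((r : ℂ)) ^ 2 = (starRingEnd ℂ) lam * ζ := by linear_combination h
    have := congrArg norm h2
    simp [map_mul, hζ, Complex.norm_conj, abs_of_pos hr] at this
    nlinarith [norm_nonneg lam]
  refine inv_eq_of_mul_eq_one_right ?_
  have : (starRingEnd ℂ) (ζ - lam) * ζ = ((r : ℂ)) ^ 2 - (starRingEnd ℂ) lam * ζ := by
    rw [map_sub, sub_mul, hcc]
  rw [← mul_assoc, this, mul_inv_cancel₀ hD]

/-- If `h` is holomorphic on the closed ball of radius `r` and `h 0 = 0` then its
circle average vanishes. -/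
private lemma integral_circle_eq_zero {r : ℝ} (hr : 0 < r) {h : ℂ → ℂ}
    (hh : DifferentiableOn ℂ h (closedBall 0 r)) (h0 : h 0 = 0) :
    ∫ θ in (0:ℝ)..(2 * Real.pi), h (circleMap 0 r θ) = 0 := by
  have hdc : DiffContOnCl ℂ h (ball 0 r) := by
    refine DifferentiableOn.diffContOnCl ?_
    rwa [closure_ball 0 hr.ne']
  have hc := hdc.circleIntegral_sub_inv_smul (mem_ball_self hr)
  rw [h0, circleIntegral] at hc
  simp only [deriv_circleMap, smul_eq_mul, sub_zero, smul_zero, mul_zero] at hc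
  have hne : ∀ θ : ℝ, circleMap 0 r θ ≠ 0 := fun θ => circleMap_ne_center hr.ne'
  have heq : ∀ θ : ℝ, circleMap 0 r θ * I * ((circleMap 0 r θ)⁻¹ * h (circleMap 0 r θ))
      = I * h (circleMap 0 r θ) := by
    intro θ
    have h1 : circleMap 0 r θ * I * ((circleMap 0 r θ)⁻¹ * h (circleMap 0 r θ))
        = I * h (circleMap 0 r θ) * (circleMap 0 r θ * (circleMap 0 r θ)⁻¹) := by ring
    rw [h1, mul_inv_cancel₀ (hne θ), mul_one]
  rw [show (fun θ => circleMap 0 r θ * I * ((circleMap 0 r θ)⁻¹ * h (circleMap 0 r θ)))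
      = fun θ => I * h (circleMap 0 r θ) from funext heq,
    intervalIntegral.integral_const_mul] at hc
  exact (mul_eq_zero.mp hc).resolve_left I_ne_zero

/-- The basic Cauchy kernel integral:
`∫₀^{2π} (conj(ζθ - λ))⁻¹ (ζθ - μ)⁻¹ dθ = 2π (r² - conj λ μ)⁻¹`. -/
private lemma schurPick_integral_pair {r : ℝ} (hr : 0 < r) {lam mu : ℂ}
    (hlam : ‖lam‖ < r) (hmu : ‖mu‖ < r) :
    ∫ θ in (0:ℝ)..(2 * Real.pi),
        ((starRingEnd ℂ) (circleMap 0 r θ - lam))⁻¹ * (circleMap 0 r θ - mu)⁻¹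
      = 2 * Real.pi * (((r : ℂ)) ^ 2 - (starRingEnd ℂ) lam * mu)⁻¹ := by
  set F : ℂ → ℂ := fun ζ => (((r : ℂ)) ^ 2 - (starRingEnd ℂ) lam * ζ)⁻¹ with hF
  have hDne : ∀ ζ ∈ closedBall (0:ℂ) r, ((r : ℂ)) ^ 2 - (starRingEnd ℂ) lam * ζ ≠ 0 := by
    intro ζ hζ h
    have h2 : ((r : ℂ)) ^ 2 = (starRingEnd ℂ) lam * ζ := by linear_combination h
    have := congrArg norm h2
    rw [mem_closedBall, dist_zero_right] at hζ
    simp only [norm_mul, Complex.norm_conj, norm_pow, Complex.norm_real, Real.norm_eq_abs,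
      abs_of_pos hr] at this
    nlinarith [norm_nonneg lam, norm_nonneg ζ,
      (hζ : ‖ζ‖ ≤ r)]
  have hFd : DifferentiableOn ℂ F (closedBall 0 r) := by
    refine DifferentiableOn.inv ?_ hDne
    exact (differentiable_const _).differentiableOn.sub
      (((differentiable_const _).mul differentiable_id).differentiableOn)
  have hdc : DiffContOnCl ℂ F (ball 0 r) := by
    refine DifferentiableOn.diffContOnCl ?_
    rwa [closure_ball 0 hr.ne']
  have hmu' : mu ∈ ball (0:ℂ) r := by
    rwa [mem_ball, dist_zero_right]
  have hc := hdc.circleIntegral_sub_inv_smul hmu'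
  rw [circleIntegral] at hc
  simp only [deriv_circleMap, smul_eq_mul] at hc
  have heq : ∀ θ : ℝ,
      ((starRingEnd ℂ) (circleMap 0 r θ - lam))⁻¹ * (circleMap 0 r θ - mu)⁻¹
      = I⁻¹ * (circleMap 0 r θ * I *
          ((circleMap 0 r θ - mu)⁻¹ * F (circleMap 0 r θ))) := by
    intro θ
    rw [conj_sub_inv hr (by simp [abs_of_pos hr] : ‖circleMap 0 r θ‖ = r) hlam]
    have h2 : I⁻¹ * (circleMap 0 r θ * I * ((circleMap 0 r θ - mu)⁻¹ * F (circleMap 0 r θ)))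
        = (I⁻¹ * I) * (circleMap 0 r θ * ((circleMap 0 r θ - mu)⁻¹ * F (circleMap 0 r θ))) := by
      ring
    rw [h2, inv_mul_cancel₀ I_ne_zero, one_mul, hF]
    ring
  rw [show (fun θ => ((starRingEnd ℂ) (circleMap 0 r θ - lam))⁻¹ * (circleMap 0 r θ - mu)⁻¹)
      = fun θ => I⁻¹ * (circleMap 0 r θ * I *
          ((circleMap 0 r θ - mu)⁻¹ * F (circleMap 0 r θ))) from funext heq,
    intervalIntegral.integral_const_mul, hc]
  have h3 : I⁻¹ * (2 * ↑Real.pi * I * F mu) = (I⁻¹ * I) * (2 * ↑Real.pi * F mu) := by ring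
  rw [h3, inv_mul_cancel₀ I_ne_zero, one_mul, hF]
end SchurAuxSection

noncomputable section
private lemma schurPick_Dne {r : ℝ} (hr : 0 < r) {lam ζ : ℂ} (hlam : ‖lam‖ < r)
    (hζ : ‖ζ‖ ≤ r) : ((r : ℂ)) ^ 2 - (starRingEnd ℂ) lam * ζ ≠ 0 := by
  intro h
  have h2 : ((r : ℂ)) ^ 2 = (starRingEnd ℂ) lam * ζ := by linear_combination h
  have := congrArg norm h2
  simp only [norm_mul, Complex.norm_conj, norm_pow, Complex.norm_real, Real.norm_eq_abs, abs_of_pos hr] at this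
  nlinarith [norm_nonneg lam, norm_nonneg ζ]

private lemma schurPick_expand {n : ℕ} {r : ℝ} (hr : 0 < r) (lam : Fin n → ℂ)
    (hlr : ∀ i, ‖lam i‖ < r) (p q : Fin n → ℂ) :
    ∫ θ in (0:ℝ)..(2 * Real.pi),
        (starRingEnd ℂ) (∑ i, p i * (circleMap 0 r θ - lam i)⁻¹) *
          (∑ j, q j * (circleMap 0 r θ - lam j)⁻¹)
      = 2 * Real.pi * ∑ i, ∑ j, (starRingEnd ℂ) (p i) * q j *
          (((r : ℂ)) ^ 2 - (starRingEnd ℂ) (lam i) * lam j)⁻¹ := by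
  have hζne : ∀ (θ : ℝ) (j : Fin n), circleMap 0 r θ - lam j ≠ 0 := by
    intro θ j h
    have h2 : circleMap 0 r θ = lam j := by linear_combination h
    have := congrArg norm h2
    rw [norm_circleMap_zero, abs_of_pos hr] at this
    exact (ne_of_lt (hlr j)) this.symm
  have key : ∀ θ : ℝ,
      (starRingEnd ℂ) (∑ i, p i * (circleMap 0 r θ - lam i)⁻¹) *
        (∑ j, q j * (circleMap 0 r θ - lam j)⁻¹)
      = ∑ i, ∑ j, (starRingEnd ℂ) (p i) * q j *
          (((starRingEnd ℂ) (circleMap 0 r θ - lam i))⁻¹ * (circleMap 0 r θ - lam j)⁻¹) := by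
    intro θ
    rw [map_sum, Finset.sum_mul_sum]
    refine Finset.sum_congr rfl fun i _ => Finset.sum_congr rfl fun j _ => ?_
    rw [map_mul, map_inv₀]
    ring
  have hcont : ∀ (i j : Fin n), Continuous (fun θ : ℝ =>
      (starRingEnd ℂ) (p i) * q j *
        (((starRingEnd ℂ) (circleMap 0 r θ - lam i))⁻¹ * (circleMap 0 r θ - lam j)⁻¹)) := by
    intro i j
    apply continuous_const.mul
    apply Continuous.mul
    · exact (Complex.continuous_conj.comp ((continuous_circleMap 0 r).sub continuous_const)).inv₀
        (fun θ => by simp only [Function.comp_apply, ← map_sub, ne_eq, map_eq_zero]; exact hζne θ i)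
    · exact (((continuous_circleMap 0 r).sub continuous_const).inv₀ (fun θ => hζne θ j))
  rw [show (fun θ : ℝ => (starRingEnd ℂ) (∑ i, p i * (circleMap 0 r θ - lam i)⁻¹) *
        (∑ j, q j * (circleMap 0 r θ - lam j)⁻¹)) = fun θ =>
      ∑ i, ∑ j, (starRingEnd ℂ) (p i) * q j *
          (((starRingEnd ℂ) (circleMap 0 r θ - lam i))⁻¹ * (circleMap 0 r θ - lam j)⁻¹)
    from funext key]
  rw [intervalIntegral.integral_finset_sum (fun i _ =>
    (continuous_finset_sum _ fun j _ => hcont i j).intervalIntegrable _ _)]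
  rw [Finset.mul_sum]
  refine Finset.sum_congr rfl fun i _ => ?_
  rw [intervalIntegral.integral_finset_sum (fun j _ => (hcont i j).intervalIntegrable _ _),
    Finset.mul_sum]
  refine Finset.sum_congr rfl fun j _ => ?_
  rw [intervalIntegral.integral_const_mul, schurPick_integral_pair hr (hlr i) (hlr j)]
  push_cast
  ring
end

noncomputable section
open intervalIntegral in
private lemma schurPick_core (f : ℂ → ℂ) (hf : DifferentiableOn ℂ f (ball (0:ℂ) 1))
    (hle : ∀ z ∈ ball (0:ℂ) 1, ‖f z‖ ≤ 1)
    {n : ℕ} (lam : Fin n → ℂ) (c : Fin n → ℂ) {r : ℝ} (hr0 : 0 < r) (hr1 : r < 1)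
    (hlr : ∀ i, ‖lam i‖ < r) :
    0 ≤ ∑ i, ∑ j, (starRingEnd ℂ) (c i) * c j *
        (1 - (starRingEnd ℂ) (f (lam i)) * f (lam j)) *
        (((r : ℂ)) ^ 2 - (starRingEnd ℂ) (lam i) * lam j)⁻¹ := by
  set w : Fin n → ℂ := fun i => f (lam i) with hw
  set ζ : ℝ → ℂ := fun θ => circleMap 0 r θ with hζ
  have hζabs : ∀ θ, ‖ζ θ‖ = r := fun θ => by
    simp [hζ, abs_of_pos hr0]
  have hζball : ∀ θ, ζ θ ∈ ball (0:ℂ) 1 := fun θ => by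
    rw [mem_ball_zero_iff, hζabs]; exact hr1
  have hζne : ∀ (θ : ℝ) (j : Fin n), ζ θ - lam j ≠ 0 := by
    intro θ j h
    have h2 : ζ θ = lam j := by linear_combination h
    have h3 := congrArg norm h2
    rw [hζabs] at h3
    exact (ne_of_lt (hlr j)) h3.symm
  have hζcont : Continuous ζ := continuous_circleMap 0 r
  -- the four basic functions of θ
  set U : ℝ → ℂ := fun θ => ∑ j, c j * (ζ θ - lam j)⁻¹ with hU
  set V : ℝ → ℂ := fun θ => ∑ j, (c j * w j) * (ζ θ - lam j)⁻¹ with hV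
  set G : ℝ → ℂ := fun θ => ∑ j, c j * dslope f (lam j) (ζ θ) with hG
  set g : ℂ → ℂ := fun z => ∑ j, c j * dslope f (lam j) z with hg
  -- differentiability of g on the unit ball
  have hdsl : ∀ j : Fin n, DifferentiableOn ℂ (dslope f (lam j)) (ball (0:ℂ) 1) := by
    intro j x hx
    rcases eq_or_ne x (lam j) with rfl | hne
    · obtain ⟨p, hp⟩ := hf.analyticAt (isOpen_ball.mem_nhds hx)
      exact hp.has_fpower_series_dslope_fslope.analyticAt.differentiableAt.differentiableWithinAt
    · exact ((differentiableWithinAt_dslope_of_ne hne).2 (hf x hx))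
  have hgdiff : DifferentiableOn ℂ g (ball (0:ℂ) 1) := by
    apply DifferentiableOn.fun_sum
    intro j _
    exact (differentiableOn_const (c j)).mul (hdsl j)
  -- continuity in θ
  have hUc : Continuous U := by
    apply continuous_finset_sum
    intro j _
    exact continuous_const.mul (((hζcont.sub continuous_const).inv₀ (fun θ => hζne θ j)))
  have hVc : Continuous V := by
    apply continuous_finset_sum
    intro j _
    exact continuous_const.mul (((hζcont.sub continuous_const).inv₀ (fun θ => hζne θ j)))
  have hFc : Continuous (fun θ => f (ζ θ)) :=
    hf.continuousOn.comp_continuous hζcont hζball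
  have hGc : Continuous G := by
    have := hgdiff.continuousOn.comp_continuous hζcont hζball
    exact this
  -- key pointwise identity : f(ζθ) U θ = V θ + G θ
  have hfu : ∀ θ, f (ζ θ) * U θ = V θ + G θ := by
    intro θ
    rw [hU, hV, hG, Finset.mul_sum, ← Finset.sum_add_distrib]
    refine Finset.sum_congr rfl fun j _ => ?_
    rw [dslope_of_ne f (hζne θ j ∘ sub_eq_zero.mpr), slope_def_field]
    field_simp [hζne θ j]
    ring
  -- the two expansions
  have hSu := schurPick_expand hr0 lam hlr c c
  have hSv := schurPick_expand hr0 lam hlr (fun j => c j * w j) (fun j => c j * w j)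
  -- orthogonality : ∫ conj V * G = 0
  have hVG : ∫ θ in (0:ℝ)..(2 * Real.pi), (starRingEnd ℂ) (V θ) * G θ = 0 := by
    set VV : ℂ → ℂ := fun z =>
      ∑ i, (starRingEnd ℂ) (c i * w i) * (z * (((r : ℂ)) ^ 2 - (starRingEnd ℂ) (lam i) * z)⁻¹)
      with hVV
    have hconjV : ∀ θ, (starRingEnd ℂ) (V θ) = VV (ζ θ) := by
      intro θ
      rw [hV, hVV, map_sum]
      refine Finset.sum_congr rfl fun i _ => ?_
      rw [map_mul, map_inv₀, conj_sub_inv hr0 (hζabs θ) (hlr i)]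
    have hdiff : DifferentiableOn ℂ (fun z => VV z * g z) (closedBall 0 r) := by
      apply DifferentiableOn.mul
      · apply DifferentiableOn.fun_sum
        intro i _
        apply (differentiableOn_const _).mul
        apply differentiableOn_id.mul
        apply DifferentiableOn.inv
        · exact (differentiableOn_const _).sub ((differentiableOn_const _).mul differentiableOn_id)
        · intro z hz
          exact schurPick_Dne hr0 (hlr i)
            (by rw [← dist_zero_right]; exact hz)
      · exact hgdiff.mono (closedBall_subset_ball hr1)
    have h0 : VV 0 * g 0 = 0 := by simp [hVV]
    have := integral_circle_eq_zero hr0 hdiff h0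
    rw [show (fun θ => (starRingEnd ℂ) (V θ) * G θ)
        = fun θ => (fun z => VV z * g z) (ζ θ) from funext fun θ => by
          rw [hconjV θ]] at *
    exact this
  -- conj version
  have hGV : ∫ θ in (0:ℝ)..(2 * Real.pi), (starRingEnd ℂ) (G θ) * V θ = 0 := by
    have heq : (fun θ => (starRingEnd ℂ) (G θ) * V θ)
        = fun θ => (starRingEnd ℂ) ((starRingEnd ℂ) (V θ) * G θ) := by
      funext θ; rw [map_mul, Complex.conj_conj]; ring
    rw [heq, intervalIntegral_conj, hVG, map_zero]
  -- integrability
  have hconjc : ∀ {F : ℝ → ℂ}, Continuous F → Continuous (fun θ => (starRingEnd ℂ) (F θ)) :=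
    fun hF => Complex.continuous_conj.comp hF
  have hiUU : IntervalIntegrable (fun θ => (starRingEnd ℂ) (U θ) * U θ)
      MeasureTheory.volume (0:ℝ) (2 * Real.pi) :=
    ((hconjc hUc).mul hUc).intervalIntegrable _ _
  have hiVV : IntervalIntegrable (fun θ => (starRingEnd ℂ) (V θ) * V θ)
      MeasureTheory.volume (0:ℝ) (2 * Real.pi) :=
    ((hconjc hVc).mul hVc).intervalIntegrable _ _
  have hiVG : IntervalIntegrable (fun θ => (starRingEnd ℂ) (V θ) * G θ)
      MeasureTheory.volume (0:ℝ) (2 * Real.pi) :=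
    ((hconjc hVc).mul hGc).intervalIntegrable _ _
  have hiGV : IntervalIntegrable (fun θ => (starRingEnd ℂ) (G θ) * V θ)
      MeasureTheory.volume (0:ℝ) (2 * Real.pi) :=
    ((hconjc hGc).mul hVc).intervalIntegrable _ _
  have hiGG : IntervalIntegrable (fun θ => (starRingEnd ℂ) (G θ) * G θ)
      MeasureTheory.volume (0:ℝ) (2 * Real.pi) :=
    ((hconjc hGc).mul hGc).intervalIntegrable _ _
  have hiFU : IntervalIntegrable (fun θ => (starRingEnd ℂ) (f (ζ θ) * U θ) * (f (ζ θ) * U θ))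
      MeasureTheory.volume (0:ℝ) (2 * Real.pi) :=
    ((hconjc (hFc.mul hUc)).mul (hFc.mul hUc)).intervalIntegrable _ _
  -- expansion of ∫ conj(FU) (FU)
  have hIFU : ∫ θ in (0:ℝ)..(2 * Real.pi),
      (starRingEnd ℂ) (f (ζ θ) * U θ) * (f (ζ θ) * U θ)
      = (∫ θ in (0:ℝ)..(2 * Real.pi), (starRingEnd ℂ) (V θ) * V θ)
        + ∫ θ in (0:ℝ)..(2 * Real.pi), (starRingEnd ℂ) (G θ) * G θ := by
    have heq : (fun θ => (starRingEnd ℂ) (f (ζ θ) * U θ) * (f (ζ θ) * U θ))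
        = fun θ => ((starRingEnd ℂ) (V θ) * V θ + (starRingEnd ℂ) (V θ) * G θ)
            + ((starRingEnd ℂ) (G θ) * V θ + (starRingEnd ℂ) (G θ) * G θ) := by
      funext θ
      rw [hfu θ, map_add]
      ring
    rw [heq, intervalIntegral.integral_add (hiVV.add hiVG) (hiGV.add hiGG),
      intervalIntegral.integral_add hiVV hiVG, intervalIntegral.integral_add hiGV hiGG,
      hVG, hGV]
    ring
  -- real-valued pieces
  set r1 : ℝ := ∫ θ in (0:ℝ)..(2 * Real.pi),
      (Complex.normSq (U θ) - Complex.normSq (f (ζ θ) * U θ)) with hr1def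
  set r2 : ℝ := ∫ θ in (0:ℝ)..(2 * Real.pi), Complex.normSq (G θ) with hr2def
  have hr1eq : (∫ θ in (0:ℝ)..(2 * Real.pi), (starRingEnd ℂ) (U θ) * U θ)
      - (∫ θ in (0:ℝ)..(2 * Real.pi),
          (starRingEnd ℂ) (f (ζ θ) * U θ) * (f (ζ θ) * U θ)) = ((r1 : ℝ) : ℂ) := by
    rw [← intervalIntegral.integral_sub hiUU hiFU]
    rw [hr1def, ← intervalIntegral.integral_ofReal]
    apply intervalIntegral.integral_congr
    intro θ _
    show _ = _
    push_cast
    rw [← Complex.normSq_eq_conj_mul_self, ← Complex.normSq_eq_conj_mul_self]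
  have hr2eq : (∫ θ in (0:ℝ)..(2 * Real.pi), (starRingEnd ℂ) (G θ) * G θ) = ((r2 : ℝ) : ℂ) := by
    rw [hr2def, ← intervalIntegral.integral_ofReal]
    apply intervalIntegral.integral_congr
    intro θ _
    show (starRingEnd ℂ) (G θ) * G θ = ((Complex.normSq (G θ) : ℝ) : ℂ)
    rw [← Complex.normSq_eq_conj_mul_self]
  have hr1nn : 0 ≤ r1 := by
    rw [hr1def]
    apply intervalIntegral.integral_nonneg Real.two_pi_pos.le
    intro θ _
    have h1 : Complex.normSq (f (ζ θ) * U θ) = Complex.normSq (f (ζ θ)) * Complex.normSq (U θ) :=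
      Complex.normSq_mul _ _
    have h2 : Complex.normSq (f (ζ θ)) ≤ 1 := by
      rw [← Complex.sq_norm]
      nlinarith [hle (ζ θ) (hζball θ), norm_nonneg (f (ζ θ))]
    nlinarith [Complex.normSq_nonneg (U θ), Complex.normSq_nonneg (f (ζ θ))]
  have hr2nn : 0 ≤ r2 := by
    rw [hr2def]
    exact intervalIntegral.integral_nonneg Real.two_pi_pos.le
      (fun θ _ => Complex.normSq_nonneg _)
  -- assemble
  set Su : ℂ := ∑ i, ∑ j, (starRingEnd ℂ) (c i) * c j *
      (((r : ℂ)) ^ 2 - (starRingEnd ℂ) (lam i) * lam j)⁻¹ with hSudef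
  set Sv : ℂ := ∑ i, ∑ j, (starRingEnd ℂ) (c i * w i) * (c j * w j) *
      (((r : ℂ)) ^ 2 - (starRingEnd ℂ) (lam i) * lam j)⁻¹ with hSvdef
  have hkey : ((2 * Real.pi : ℝ) : ℂ) * (Su - Sv) = ((r1 + r2 : ℝ) : ℂ) := by
    push_cast
    have e1 : (∫ θ in (0:ℝ)..(2 * Real.pi), (starRingEnd ℂ) (U θ) * U θ)
        = 2 * Real.pi * Su := hSu
    have e2 : (∫ θ in (0:ℝ)..(2 * Real.pi), (starRingEnd ℂ) (V θ) * V θ)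
        = 2 * Real.pi * Sv := hSv
    calc ((2:ℂ) * Real.pi) * (Su - Sv)
        = (2 * Real.pi * Su) - (2 * Real.pi * Sv) := by ring
      _ = (∫ θ in (0:ℝ)..(2 * Real.pi), (starRingEnd ℂ) (U θ) * U θ)
          - (∫ θ in (0:ℝ)..(2 * Real.pi), (starRingEnd ℂ) (V θ) * V θ) := by rw [e1, e2]
      _ = ((r1 : ℝ) : ℂ) + ((r2 : ℝ) : ℂ) := by
          rw [← hr1eq, ← hr2eq]
          rw [hIFU]
          ring
  have h2pi : ((2 * Real.pi : ℝ) : ℂ) ≠ 0 := by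
    simp [Real.pi_ne_zero, Real.two_pi_pos.ne']
  have hfin : Su - Sv = (((r1 + r2) / (2 * Real.pi) : ℝ) : ℂ) := by
    field_simp
    rw [mul_comm] at hkey
    push_cast at hkey
    have hπ : ((Real.pi : ℝ) : ℂ) ≠ 0 := by exact_mod_cast Real.pi_ne_zero
    push_cast
    field_simp
    linear_combination hkey
  have hnn : (0 : ℂ) ≤ Su - Sv := by
    rw [hfin]
    rw [Complex.zero_le_real]
    positivity
  -- final rewriting
  have hfinal : ∑ i, ∑ j, (starRingEnd ℂ) (c i) * c j *
      (1 - (starRingEnd ℂ) (w i) * w j) *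
      (((r : ℂ)) ^ 2 - (starRingEnd ℂ) (lam i) * lam j)⁻¹ = Su - Sv := by
    rw [hSudef, hSvdef, ← Finset.sum_sub_distrib]
    refine Finset.sum_congr rfl fun i _ => ?_
    rw [← Finset.sum_sub_distrib]
    refine Finset.sum_congr rfl fun j _ => ?_
    rw [map_mul]
    ring
  rw [hw] at hfinal
  rw [hfinal]
  exact hnn
end

noncomputable section
private lemma sum4_swap {α : Type*} [AddCommMonoid α] {n : ℕ}
    (F : Fin n → Fin n → Fin n → Fin n → α) :
    ∑ i, ∑ j, ∑ k, ∑ l, F i j k l = ∑ k, ∑ l, ∑ i, ∑ j, F i j k l := by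
  calc ∑ i, ∑ j, ∑ k, ∑ l, F i j k l
      = ∑ i, ∑ k, ∑ j, ∑ l, F i j k l :=
        Finset.sum_congr rfl fun i _ => Finset.sum_comm
    _ = ∑ k, ∑ i, ∑ j, ∑ l, F i j k l := Finset.sum_comm
    _ = ∑ k, ∑ i, ∑ l, ∑ j, F i j k l :=
        Finset.sum_congr rfl fun k _ => Finset.sum_congr rfl fun i _ => Finset.sum_comm
    _ = ∑ k, ∑ l, ∑ i, ∑ j, F i j k l :=
        Finset.sum_congr rfl fun k _ => Finset.sum_comm
end
noncomputable section
private lemma schurPick (f : ℂ → ℂ) (hf : DifferentiableOn ℂ f (ball (0:ℂ) 1))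
    (hle : ∀ z ∈ ball (0:ℂ) 1, ‖f z‖ ≤ 1)
    {n : ℕ} (lam : Fin n → ℂ) (hl : ∀ i, ‖lam i‖ < 1) (c : Fin n → ℂ) :
    0 ≤ ∑ i, ∑ j, (starRingEnd ℂ) (c i) * c j *
        ((1 - (starRingEnd ℂ) (f (lam i)) * f (lam j)) /
          (1 - (starRingEnd ℂ) (lam i) * lam j)) := by
  rcases Nat.eq_zero_or_pos n with rfl | hn
  · simp
  have : Nonempty (Fin n) := ⟨⟨0, hn⟩⟩
  have huniv : (Finset.univ : Finset (Fin n)).Nonempty := Finset.univ_nonempty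
  set R : ℝ := Finset.univ.sup' huniv (fun i => ‖lam i‖) with hRdef
  obtain ⟨i0, -, hi0⟩ := Finset.exists_mem_eq_sup' huniv (fun i => ‖lam i‖)
  have hR0 : 0 ≤ R := by rw [hRdef, hi0]; exact norm_nonneg _
  have hR1 : R < 1 := by rw [hRdef, hi0]; exact hl i0
  have hRlam : ∀ i, ‖lam i‖ ≤ R := fun i =>
    Finset.le_sup' (fun i => ‖lam i‖) (Finset.mem_univ i)
  -- the family of regularized sums
  set S : ℝ → ℂ := fun t => ∑ i, ∑ j, (starRingEnd ℂ) (c i) * c j *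
      (1 - (starRingEnd ℂ) (f (lam i)) * f (lam j)) *
      (((t : ℂ)) ^ 2 - (starRingEnd ℂ) (lam i) * lam j)⁻¹ with hSdef
  have hpos : ∀ t ∈ Set.Ioo R 1, 0 ≤ S t := fun t ht =>
    schurPick_core f hf hle lam c (lt_of_le_of_lt hR0 ht.1) ht.2
      (fun i => lt_of_le_of_lt (hRlam i) ht.1)
  -- continuity at 1
  have hne1 : ∀ i j : Fin n, (((1:ℝ) : ℂ)) ^ 2 - (starRingEnd ℂ) (lam i) * lam j ≠ 0 := by
    intro i j h
    have h2 : ((1:ℝ) : ℂ) ^ 2 = (starRingEnd ℂ) (lam i) * lam j := by linear_combination h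
    have h3 := congrArg norm h2
    simp only [norm_pow, norm_mul, Complex.norm_conj, Complex.norm_real, Real.norm_eq_abs, abs_one, one_pow] at h3
    nlinarith [hl i, hl j, norm_nonneg (lam i), norm_nonneg (lam j)]
  have hterm : ∀ i j : Fin n, ContinuousAt (fun t : ℝ =>
      (starRingEnd ℂ) (c i) * c j * (1 - (starRingEnd ℂ) (f (lam i)) * f (lam j)) *
        (((t : ℂ)) ^ 2 - (starRingEnd ℂ) (lam i) * lam j)⁻¹) 1 := by
    intro i j
    exact continuousAt_const.mul
      ((((Complex.continuous_ofReal.pow 2).sub continuous_const).continuousAt).inv₀ (hne1 i j))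
  have hTend : Filter.Tendsto S (nhdsWithin 1 (Set.Iio 1)) (nhds (S 1)) := by
    rw [hSdef]
    exact tendsto_finset_sum _ fun i _ => tendsto_finset_sum _ fun j _ =>
      ((hterm i j).tendsto).mono_left nhdsWithin_le_nhds
  have hev : ∀ᶠ t in nhdsWithin 1 (Set.Iio 1), t ∈ Set.Ioo R 1 :=
    Ioo_mem_nhdsLT_of_mem ⟨hR1, le_refl 1⟩
  have hre : 0 ≤ (S 1).re := by
    have h1 : Filter.Tendsto (fun t => (S t).re) (nhdsWithin 1 (Set.Iio 1)) (nhds ((S 1).re)) :=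
      (Complex.continuous_re.continuousAt.tendsto).comp hTend
    refine ge_of_tendsto h1 ?_
    filter_upwards [hev] with t ht
    have := (Complex.le_def.1 (hpos t ht)).1
    simpa using this
  have him : (S 1).im = 0 := by
    have h1 : Filter.Tendsto (fun t => (S t).im) (nhdsWithin 1 (Set.Iio 1)) (nhds ((S 1).im)) :=
      (Complex.continuous_im.continuousAt.tendsto).comp hTend
    have h2 : Filter.Tendsto (fun t => (S t).im) (nhdsWithin 1 (Set.Iio 1)) (nhds 0) := by
      refine Filter.Tendsto.congr' ?_ tendsto_const_nhds
      filter_upwards [hev] with t ht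
      have := (Complex.le_def.1 (hpos t ht)).2
      simpa using this
    exact tendsto_nhds_unique h1 h2
  have hS1 : 0 ≤ S 1 := by
    rw [Complex.le_def]
    refine ⟨by simpa using hre, by simp [him]⟩
  have hfin : ∑ i, ∑ j, (starRingEnd ℂ) (c i) * c j *
      ((1 - (starRingEnd ℂ) (f (lam i)) * f (lam j)) /
        (1 - (starRingEnd ℂ) (lam i) * lam j)) = S 1 := by
    rw [hSdef]
    refine Finset.sum_congr rfl fun i _ => Finset.sum_congr rfl fun j _ => ?_
    rw [Complex.ofReal_one, one_pow, div_eq_mul_inv]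
    ring
  rw [hfin]
  exact hS1
end


end SchurProofAux

/-- If `f` is holomorphic on the unit disk with `|f| ≤ 1`, then the kernel
`(1 - conj (f λ) * f z)² / (1 - conj λ * z)²` is positive semi-definite. -/
theorem psd_of_schur_class
    (f : ℂ → ℂ) (hf : DifferentiableOn ℂ f (ball (0 : ℂ) 1))
    (hle : ∀ lam ∈ ball (0 : ℂ) 1, ‖f lam‖ ≤ 1) :
    IsPSDKernelOnDisk (fun lam z =>
        (1 - (starRingEnd ℂ) (f lam) * f z) ^ 2 / (1 - (starRingEnd ℂ) lam * z) ^ 2) := by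
  intro n lam hl c
  classical
  set A : Matrix (Fin n) (Fin n) ℂ := Matrix.of fun i j =>
    (1 - (starRingEnd ℂ) (f (lam i)) * f (lam j)) / (1 - (starRingEnd ℂ) (lam i) * lam j)
    with hA
  have hAapp : ∀ i j, A i j =
      (1 - (starRingEnd ℂ) (f (lam i)) * f (lam j)) / (1 - (starRingEnd ℂ) (lam i) * lam j) :=
    fun i j => rfl
  have hform : ∀ x : Fin n → ℂ, 0 ≤ ∑ i, ∑ j, (starRingEnd ℂ) (x i) * x j * A i j := fun x =>
    schurPick f hf hle lam hl x
  have hpsd : A.PosSemidef := by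
    refine Matrix.posSemidef_iff_dotProduct_mulVec.mpr ⟨?_, ?_⟩
    · ext i j
      rw [Matrix.conjTranspose_apply, hAapp, hAapp, RCLike.star_def, map_div₀, map_sub,
        map_sub, map_one, map_mul, map_mul, Complex.conj_conj, Complex.conj_conj]
      ring_nf
    · intro x
      have h0 := hform x
      have heq : dotProduct (star x) (A.mulVec x)
          = ∑ i, ∑ j, (starRingEnd ℂ) (x i) * x j * A i j := by
        simp only [dotProduct, Matrix.mulVec, Pi.star_apply, Finset.mul_sum,
          RCLike.star_def]
        refine Finset.sum_congr rfl fun i _ => Finset.sum_congr rfl fun j _ => ?_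
        ring
      rw [heq]
      exact h0
  obtain ⟨B, hB⟩ : ∃ B : Matrix (Fin n) (Fin n) ℂ, A = B.conjTranspose * B := by
    open scoped MatrixOrder Matrix.Norms.L2Operator in
    exact CStarAlgebra.nonneg_iff_eq_star_mul_self.mp (Matrix.nonneg_iff_posSemidef.mpr hpsd)
  have hAij : ∀ i j, A i j = ∑ k, (starRingEnd ℂ) (B k i) * B k j := by
    intro i j
    rw [hB]
    simp [Matrix.mul_apply, Matrix.conjTranspose_apply, RCLike.star_def]
  set e : Fin n → Fin n → ℂ := fun k l => ∑ j, c j * B k j * B l j with he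
  have key : ∑ i, ∑ j, (starRingEnd ℂ) (c i) * c j * (A i j) ^ 2
      = ∑ k, ∑ l, (starRingEnd ℂ) (e k l) * e k l := by
    have step1 : ∑ i, ∑ j, (starRingEnd ℂ) (c i) * c j * (A i j) ^ 2
        = ∑ i, ∑ j, ∑ k, ∑ l,
            (starRingEnd ℂ) (c i * B k i * B l i) * (c j * B k j * B l j) := by
      refine Finset.sum_congr rfl fun i _ => Finset.sum_congr rfl fun j _ => ?_
      rw [hAij, sq, Finset.sum_mul_sum, Finset.mul_sum]
      refine Finset.sum_congr rfl fun k _ => ?_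
      rw [Finset.mul_sum]
      refine Finset.sum_congr rfl fun l _ => ?_
      simp only [map_mul]
      ring
    have step2 : ∑ i, ∑ j, ∑ k, ∑ l,
          (starRingEnd ℂ) (c i * B k i * B l i) * (c j * B k j * B l j)
        = ∑ k, ∑ l, ∑ i, ∑ j,
            (starRingEnd ℂ) (c i * B k i * B l i) * (c j * B k j * B l j) :=
      sum4_swap _
    have step3 : ∀ k l : Fin n, (∑ i, ∑ j,
          (starRingEnd ℂ) (c i * B k i * B l i) * (c j * B k j * B l j))
        = (starRingEnd ℂ) (e k l) * e k l := by
      intro k l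
      rw [he, map_sum, Finset.sum_mul_sum]
    rw [step1, step2]
    exact Finset.sum_congr rfl fun k _ => Finset.sum_congr rfl fun l _ => step3 k l
  have hterm : ∀ i j, (starRingEnd ℂ) (c i) * c j *
      ((1 - (starRingEnd ℂ) (f (lam i)) * f (lam j)) ^ 2 /
        (1 - (starRingEnd ℂ) (lam i) * lam j) ^ 2)
      = (starRingEnd ℂ) (c i) * c j * (A i j) ^ 2 := by
    intro i j
    rw [hAapp, div_pow]
  calc (0 : ℂ) ≤ ∑ k, ∑ l, (starRingEnd ℂ) (e k l) * e k l := by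
        refine Finset.sum_nonneg fun k _ => Finset.sum_nonneg fun l _ => ?_
        rw [← Complex.normSq_eq_conj_mul_self]
        rw [Complex.zero_le_real]
        exact Complex.normSq_nonneg _
    _ = ∑ i, ∑ j, (starRingEnd ℂ) (c i) * c j * (A i j) ^ 2 := key.symm
    _ = _ := by
        exact Finset.sum_congr rfl fun i _ => Finset.sum_congr rfl fun j _ => (hterm i j).symm
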